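/- The kurtosis matrix of the four-directional box spline β⁴_a equals K_a = (μ₄ − 3μ₂²)[[a₁⁴ + (a₂⁴+a₄⁴)/2, (a₂⁴−a₄⁴)/2],[(a₂⁴−a₄⁴)/2, a₃⁴ + (a₂⁴+a₄⁴)/2]], where μ₂ = 1/12 and μ₄ = 1/80 are the second and fourth moments of the unit box β₁; consequently ‖K_a‖_F² = (μ₄−3μ₂²)² (∑_{k=1}^4 a_k⁸ + (a₁⁴+a₃⁴)(a₂⁴+a₄⁴)). -/

import Mathlib

open MeasureTheory Real

/-- The 1-D box function: `β_a(x) = 1/a` for `-a/2 < x ≤ a/2`, and `0` otherwise. -/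
noncomputable def boxFun (a x : ℝ) : ℝ := if -a/2 < x ∧ x ≤ a/2 then 1/a else 0

/-- Normalized sinc: `sinc x = sin x / x`, with `sinc 0 = 1`. -/
noncomputable def sinc (x : ℝ) : ℝ := if x = 0 then 1 else Real.sin x / x

/-- The directional box distribution `φ_{a,θ}`, realized as the pushforward of the
1-D box density `β_a` under the embedding `t ↦ t·u_θ = (t cos θ, t sin θ)` of `ℝ` into `ℝ²`. -/
noncomputable def dirBoxMeasure (a θ : ℝ) : Measure (ℝ × ℝ) :=
  Measure.map (fun t : ℝ => (t * Real.cos θ, t * Real.sin θ))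
    (volume.withDensity fun t => ENNReal.ofReal (boxFun a t))

/-- The radially-uniform box spline measure of directional order `N`:
the convolution `φ_{a₀,θ₀} ∗ ⋯ ∗ φ_{a_{N-1},θ_{N-1}}`. -/
noncomputable def boxSplineMeasure (a θ : ℕ → ℝ) : ℕ → Measure (ℝ × ℝ)
  | 0 => Measure.dirac 0
  | n + 1 => Measure.conv (boxSplineMeasure a θ n) (dirBoxMeasure (a n) (θ n))


noncomputable def boxMeasure (a : ℝ) : Measure ℝ :=
  volume.withDensity fun t => ENNReal.ofReal (boxFun a t)

lemma boxMeasure_eq (a : ℝ) :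
    boxMeasure a = ENNReal.ofReal (1/a) • volume.restrict (Set.Ioc (-a/2) (a/2)) := by
  have h : (fun t => ENNReal.ofReal (boxFun a t))
      = (Set.Ioc (-a/2) (a/2)).indicator (fun _ => ENNReal.ofReal (1/a)) := by
    funext t
    by_cases ht : t ∈ Set.Ioc (-a/2) (a/2)
    · simp [boxFun, Set.indicator_of_mem ht, (Set.mem_Ioc.1 ht).1, (Set.mem_Ioc.1 ht).2]
    · have : ¬(-a/2 < t ∧ t ≤ a/2) := by simpa [Set.mem_Ioc] using ht
      simp [boxFun, this, Set.indicator_of_notMem ht]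
  rw [boxMeasure, h, withDensity_indicator measurableSet_Ioc, withDensity_const]

lemma isProbabilityMeasure_boxMeasure {a : ℝ} (ha : 0 < a) :
    IsProbabilityMeasure (boxMeasure a) := by
  constructor
  rw [boxMeasure_eq]
  rw [Measure.smul_apply, Measure.restrict_apply MeasurableSet.univ, Set.univ_inter,
    Real.volume_Ioc, smul_eq_mul, ← ENNReal.ofReal_mul (by positivity)]
  have h1 : 1/a * (a/2 - -a/2) = 1 := by field_simp; norm_num
  rw [h1, ENNReal.ofReal_one]

lemma boxMeasure_ae_bound {a : ℝ} (ha : 0 < a) :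
    ∀ᵐ t ∂(boxMeasure a), |t| ≤ a := by
  rw [boxMeasure_eq]
  refine Measure.ae_smul_measure ?_ _
  filter_upwards [ae_restrict_mem measurableSet_Ioc] with t ht
  rw [abs_le]
  constructor <;> [linarith [ht.1]; linarith [ht.2]]

lemma integral_boxMeasure_poly {a : ℝ} (ha : 0 < a) (c₀ c₁ c₂ c₃ c₄ : ℝ) :
    ∫ t, (c₀ + c₁*t + c₂*t^2 + c₃*t^3 + c₄*t^4) ∂(boxMeasure a)
      = c₀ + c₂*(a^2/12) + c₄*(a^4/80) := by
  rw [boxMeasure_eq, integral_smul_measure, ENNReal.toReal_ofReal (by positivity),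
    ← intervalIntegral.integral_of_le (by linarith)]
  have hF : ∀ t : ℝ, HasDerivAt (fun t => c₀*t + c₁*t^2/2 + c₂*t^3/3 + c₃*t^4/4 + c₄*t^5/5)
      (c₀ + c₁*t + c₂*t^2 + c₃*t^3 + c₄*t^4) t := by
    intro t
    have h1 := (hasDerivAt_pow 1 t)
    have h2 := (hasDerivAt_pow 2 t)
    have h3 := (hasDerivAt_pow 3 t)
    have h4 := (hasDerivAt_pow 4 t)
    have h5 := (hasDerivAt_pow 5 t)
    have := ((((h1.const_mul c₀).add ((h2.const_mul c₁).div_const 2)).add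
      ((h3.const_mul c₂).div_const 3)).add ((h4.const_mul c₃).div_const 4)).add
      ((h5.const_mul c₄).div_const 5)
    convert this using 1
    all_goals first | rfl | (funext x; simp only [Pi.add_apply]; ring) | (push_cast; ring)
  rw [intervalIntegral.integral_eq_sub_of_hasDerivAt (fun t _ => hF t)
    (Continuous.intervalIntegrable (by continuity) _ _)]
  field_simp
  rw [smul_eq_mul]
  field_simp
  ring

lemma measurable_emb (θ : ℝ) : Measurable (fun t : ℝ => (t * Real.cos θ, t * Real.sin θ)) :=
  (measurable_id.mul_const _).prod (measurable_id.mul_const _)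

lemma dirBox_eq (a θ : ℝ) :
    dirBoxMeasure a θ
      = Measure.map (fun t : ℝ => (t * Real.cos θ, t * Real.sin θ)) (boxMeasure a) := rfl

lemma isProbabilityMeasure_dirBox {a : ℝ} (ha : 0 < a) (θ : ℝ) :
    IsProbabilityMeasure (dirBoxMeasure a θ) := by
  haveI := isProbabilityMeasure_boxMeasure ha
  rw [dirBox_eq]
  exact Measure.isProbabilityMeasure_map (measurable_emb θ).aemeasurable

lemma dirBox_ae_bound {a : ℝ} (ha : 0 < a) (θ : ℝ) :
    ∀ᵐ z ∂(dirBoxMeasure a θ), ‖z‖ ≤ a := by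
  rw [dirBox_eq, ae_map_iff (measurable_emb θ).aemeasurable
    (isClosed_le (by continuity) continuous_const).measurableSet]
  filter_upwards [boxMeasure_ae_bound ha] with t ht
  have hc : |t * Real.cos θ| ≤ a := by
    rw [abs_mul]
    calc |t| * |Real.cos θ| ≤ |t| * 1 := by
          exact mul_le_mul_of_nonneg_left (Real.abs_cos_le_one θ) (abs_nonneg t)
      _ ≤ a := by simpa using ht
  have hs : |t * Real.sin θ| ≤ a := by
    rw [abs_mul]
    calc |t| * |Real.sin θ| ≤ |t| * 1 := by
          exact mul_le_mul_of_nonneg_left (Real.abs_sin_le_one θ) (abs_nonneg t)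
      _ ≤ a := by simpa using ht
  simp only [Prod.norm_def, Real.norm_eq_abs]
  exact max_le hc hs

lemma ae_prod_bound {μ ν : Measure (ℝ × ℝ)} [SFinite μ] [SFinite ν] {R S : ℝ}
    (hμ : ∀ᵐ x ∂μ, ‖x‖ ≤ R) (hν : ∀ᵐ y ∂ν, ‖y‖ ≤ S) :
    ∀ᵐ p ∂(μ.prod ν), ‖p.1‖ ≤ R ∧ ‖p.2‖ ≤ S := by
  have hm : MeasurableSet {p : (ℝ × ℝ) × (ℝ × ℝ) | ‖p.1‖ ≤ R ∧ ‖p.2‖ ≤ S} :=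
    (measurableSet_le continuous_fst.norm.measurable measurable_const).inter
      (measurableSet_le continuous_snd.norm.measurable measurable_const)
  rw [Measure.ae_prod_iff_ae_ae hm]
  filter_upwards [hμ] with x hx
  filter_upwards [hν] with y hy
  exact ⟨hx, hy⟩

lemma conv_dirBox_ae_bound (μ : Measure (ℝ × ℝ)) [IsProbabilityMeasure μ] {R a : ℝ}
    (hR : ∀ᵐ x ∂μ, ‖x‖ ≤ R) (ha : 0 < a) (θ : ℝ) :
    ∀ᵐ z ∂(μ.conv (dirBoxMeasure a θ)), ‖z‖ ≤ R + a := by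
  haveI := isProbabilityMeasure_dirBox ha θ
  rw [Measure.conv, ae_map_iff (show Measurable (fun x : (ℝ × ℝ) × (ℝ × ℝ) => x.1 + x.2) from measurable_fst.add measurable_snd).aemeasurable
    (isClosed_le (by continuity) continuous_const).measurableSet]
  filter_upwards [ae_prod_bound hR (dirBox_ae_bound ha θ)] with p hp
  calc ‖p.1 + p.2‖ ≤ ‖p.1‖ + ‖p.2‖ := norm_add_le _ _
    _ ≤ R + a := add_le_add hp.1 hp.2

lemma integral_conv_dirBox (μ : Measure (ℝ × ℝ)) [IsProbabilityMeasure μ] {R a : ℝ}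
    (hR : ∀ᵐ x ∂μ, ‖x‖ ≤ R) (ha : 0 < a) (θ : ℝ) (f : ℝ × ℝ → ℝ) (hf : Continuous f) :
    ∫ z, f z ∂(μ.conv (dirBoxMeasure a θ))
      = ∫ x, ∫ t, f (x.1 + t * Real.cos θ, x.2 + t * Real.sin θ) ∂(boxMeasure a) ∂μ := by
  haveI := isProbabilityMeasure_dirBox ha θ
  haveI := isProbabilityMeasure_boxMeasure ha
  obtain ⟨C, hC⟩ := (isCompact_closedBall (0 : ℝ × ℝ) (|R| + a)).exists_bound_of_continuousOn
    hf.continuousOn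
  have hint : Integrable (fun p : (ℝ × ℝ) × (ℝ × ℝ) => f (p.1 + p.2))
      (μ.prod (dirBoxMeasure a θ)) := by
    refine Integrable.mono' (integrable_const C)
      (hf.comp (continuous_fst.add continuous_snd)).aestronglyMeasurable ?_
    filter_upwards [ae_prod_bound hR (dirBox_ae_bound ha θ)] with p hp
    refine hC _ ?_
    rw [Metric.mem_closedBall, dist_zero_right]
    calc ‖p.1 + p.2‖ ≤ ‖p.1‖ + ‖p.2‖ := norm_add_le _ _
      _ ≤ |R| + a := add_le_add (hp.1.trans (le_abs_self R)) hp.2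
  rw [Measure.conv, integral_map (show Measurable (fun x : (ℝ × ℝ) × (ℝ × ℝ) => x.1 + x.2) from measurable_fst.add measurable_snd).aemeasurable
    hf.aestronglyMeasurable, MeasureTheory.integral_prod _ hint]
  congr 1
  funext x
  rw [dirBox_eq]
  have hmeq : ∫ y, f (x + y)
        ∂(Measure.map (fun t : ℝ => (t * Real.cos θ, t * Real.sin θ)) (boxMeasure a))
      = ∫ t, f (x + (t * Real.cos θ, t * Real.sin θ)) ∂(boxMeasure a) :=
    integral_map (measurable_emb θ).aemeasurable
      ((hf.comp (continuous_const.add continuous_id)).aestronglyMeasurable)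
  refine hmeq.trans ?_
  congr 1

lemma integrable_cont (μ : Measure (ℝ × ℝ)) [IsFiniteMeasure μ] {R : ℝ}
    (hR : ∀ᵐ x ∂μ, ‖x‖ ≤ R) (g : ℝ × ℝ → ℝ) (hg : Continuous g) : Integrable g μ := by
  obtain ⟨C, hC⟩ := (isCompact_closedBall (0 : ℝ × ℝ) |R|).exists_bound_of_continuousOn
    hg.continuousOn
  refine Integrable.mono' (integrable_const C) hg.aestronglyMeasurable ?_
  filter_upwards [hR] with x hx
  exact hC x (by rw [Metric.mem_closedBall, dist_zero_right]; exact hx.trans (le_abs_self R))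

set_option maxHeartbeats 1000000 in
lemma key (μ : Measure (ℝ × ℝ)) [IsProbabilityMeasure μ] {R : ℝ} (hR : ∀ᵐ x ∂μ, ‖x‖ ≤ R)
    {a : ℝ} (ha : 0 < a) (θ c s : ℝ) (hc : Real.cos θ = c) (hs : Real.sin θ = s)
    {M20 M11 M02 M40 M31 M22 M13 M04 : ℝ}
    (h20 : (∫ x : ℝ × ℝ, x.1^2 ∂μ) = M20)
    (h11 : (∫ x : ℝ × ℝ, x.1*x.2 ∂μ) = M11)
    (h02 : (∫ x : ℝ × ℝ, x.2^2 ∂μ) = M02)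
    (h40 : (∫ x : ℝ × ℝ, x.1^4 ∂μ) = M40)
    (h31 : (∫ x : ℝ × ℝ, x.1^3*x.2 ∂μ) = M31)
    (h22 : (∫ x : ℝ × ℝ, x.1^2*x.2^2 ∂μ) = M22)
    (h13 : (∫ x : ℝ × ℝ, x.1*x.2^3 ∂μ) = M13)
    (h04 : (∫ x : ℝ × ℝ, x.2^4 ∂μ) = M04)
    (f : ℝ × ℝ → ℝ) (hf : Continuous f)
    (d0 d20 d11 d02 d40 d31 d22 d13 d04 e0 e20 e11 e02 k4 : ℝ) (p1 p3 : ℝ × ℝ → ℝ)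
    (hexp : ∀ x : ℝ × ℝ, ∀ t : ℝ, f (x.1 + t*c, x.2 + t*s) =
      (d0 + d20*x.1^2 + d11*(x.1*x.2) + d02*x.2^2 + d40*x.1^4 + d31*(x.1^3*x.2)
        + d22*(x.1^2*x.2^2) + d13*(x.1*x.2^3) + d04*x.2^4)
      + p1 x * t
      + (e0 + e20*x.1^2 + e11*(x.1*x.2) + e02*x.2^2) * t^2
      + p3 x * t^3 + k4 * t^4) :
    ∫ z, f z ∂(μ.conv (dirBoxMeasure a θ)) =
      (d0 + (a^2/12)*e0 + (a^4/80)*k4)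
      + (d20 + (a^2/12)*e20)*M20 + (d11 + (a^2/12)*e11)*M11 + (d02 + (a^2/12)*e02)*M02
      + d40*M40 + d31*M31 + d22*M22 + d13*M13 + d04*M04 := by
  rw [integral_conv_dirBox μ hR ha θ f hf]
  have hin : ∀ x : ℝ × ℝ,
      ∫ t, f (x.1 + t * Real.cos θ, x.2 + t * Real.sin θ) ∂(boxMeasure a)
        = (d0 + (a^2/12)*e0 + (a^4/80)*k4)
          + (d20 + (a^2/12)*e20)*x.1^2 + (d11 + (a^2/12)*e11)*(x.1*x.2)
          + (d02 + (a^2/12)*e02)*x.2^2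
          + d40*x.1^4 + d31*(x.1^3*x.2) + d22*(x.1^2*x.2^2) + d13*(x.1*x.2^3)
          + d04*x.2^4 := by
    intro x
    rw [hc, hs]
    rw [show (fun t => f (x.1 + t*c, x.2 + t*s))
        = fun t => (d0 + d20*x.1^2 + d11*(x.1*x.2) + d02*x.2^2 + d40*x.1^4 + d31*(x.1^3*x.2)
            + d22*(x.1^2*x.2^2) + d13*(x.1*x.2^3) + d04*x.2^4)
          + p1 x * t
          + (e0 + e20*x.1^2 + e11*(x.1*x.2) + e02*x.2^2) * t^2
          + p3 x * t^3 + k4 * t^4 from funext (hexp x)]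
    rw [integral_boxMeasure_poly ha]
    ring
  rw [show (fun x : ℝ × ℝ =>
      ∫ t, f (x.1 + t * Real.cos θ, x.2 + t * Real.sin θ) ∂(boxMeasure a))
      = fun x : ℝ × ℝ =>
        (d0 + (a^2/12)*e0 + (a^4/80)*k4)
          + (d20 + (a^2/12)*e20)*x.1^2 + (d11 + (a^2/12)*e11)*(x.1*x.2)
          + (d02 + (a^2/12)*e02)*x.2^2
          + d40*x.1^4 + d31*(x.1^3*x.2) + d22*(x.1^2*x.2^2) + d13*(x.1*x.2^3)
          + d04*x.2^4 from funext hin]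
  have J20 : Integrable (fun x : ℝ × ℝ => x.1^2) μ := integrable_cont μ hR _ (by fun_prop)
  have J11 : Integrable (fun x : ℝ × ℝ => x.1*x.2) μ := integrable_cont μ hR _ (by fun_prop)
  have J02 : Integrable (fun x : ℝ × ℝ => x.2^2) μ := integrable_cont μ hR _ (by fun_prop)
  have J40 : Integrable (fun x : ℝ × ℝ => x.1^4) μ := integrable_cont μ hR _ (by fun_prop)
  have J31 : Integrable (fun x : ℝ × ℝ => x.1^3*x.2) μ := integrable_cont μ hR _ (by fun_prop)
  have J22 : Integrable (fun x : ℝ × ℝ => x.1^2*x.2^2) μ := integrable_cont μ hR _ (by fun_prop)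
  have J13 : Integrable (fun x : ℝ × ℝ => x.1*x.2^3) μ := integrable_cont μ hR _ (by fun_prop)
  have J04 : Integrable (fun x : ℝ × ℝ => x.2^4) μ := integrable_cont μ hR _ (by fun_prop)
  have P0 : Integrable (fun _ : ℝ × ℝ => (d0 + (a^2/12)*e0 + (a^4/80)*k4)) μ := integrable_const _
  have P1 : Integrable (fun x : ℝ × ℝ => (d0 + (a^2/12)*e0 + (a^4/80)*k4) + (d20 + (a^2/12)*e20)*x.1^2) μ := P0.add (J20.const_mul _)
  have P2 : Integrable (fun x : ℝ × ℝ => (d0 + (a^2/12)*e0 + (a^4/80)*k4) + (d20 + (a^2/12)*e20)*x.1^2 + (d11 + (a^2/12)*e11)*(x.1*x.2)) μ := P1.add (J11.const_mul _)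
  have P3 : Integrable (fun x : ℝ × ℝ => (d0 + (a^2/12)*e0 + (a^4/80)*k4) + (d20 + (a^2/12)*e20)*x.1^2 + (d11 + (a^2/12)*e11)*(x.1*x.2) + (d02 + (a^2/12)*e02)*x.2^2) μ := P2.add (J02.const_mul _)
  have P4 : Integrable (fun x : ℝ × ℝ => (d0 + (a^2/12)*e0 + (a^4/80)*k4) + (d20 + (a^2/12)*e20)*x.1^2 + (d11 + (a^2/12)*e11)*(x.1*x.2) + (d02 + (a^2/12)*e02)*x.2^2 + d40*x.1^4) μ := P3.add (J40.const_mul _)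
  have P5 : Integrable (fun x : ℝ × ℝ => (d0 + (a^2/12)*e0 + (a^4/80)*k4) + (d20 + (a^2/12)*e20)*x.1^2 + (d11 + (a^2/12)*e11)*(x.1*x.2) + (d02 + (a^2/12)*e02)*x.2^2 + d40*x.1^4 + d31*(x.1^3*x.2)) μ := P4.add (J31.const_mul _)
  have P6 : Integrable (fun x : ℝ × ℝ => (d0 + (a^2/12)*e0 + (a^4/80)*k4) + (d20 + (a^2/12)*e20)*x.1^2 + (d11 + (a^2/12)*e11)*(x.1*x.2) + (d02 + (a^2/12)*e02)*x.2^2 + d40*x.1^4 + d31*(x.1^3*x.2) + d22*(x.1^2*x.2^2)) μ := P5.add (J22.const_mul _)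
  have P7 : Integrable (fun x : ℝ × ℝ => (d0 + (a^2/12)*e0 + (a^4/80)*k4) + (d20 + (a^2/12)*e20)*x.1^2 + (d11 + (a^2/12)*e11)*(x.1*x.2) + (d02 + (a^2/12)*e02)*x.2^2 + d40*x.1^4 + d31*(x.1^3*x.2) + d22*(x.1^2*x.2^2) + d13*(x.1*x.2^3)) μ := P6.add (J13.const_mul _)
  rw [integral_add P7 (J04.const_mul _),
    integral_add P6 (J13.const_mul _),
    integral_add P5 (J22.const_mul _),
    integral_add P4 (J31.const_mul _),
    integral_add P3 (J40.const_mul _),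
    integral_add P2 (J02.const_mul _),
    integral_add P1 (J11.const_mul _),
    integral_add P0 (J20.const_mul _),
    integral_const, integral_const_mul _ _, integral_const_mul _ _, integral_const_mul _ _, integral_const_mul _ _, integral_const_mul _ _, integral_const_mul _ _, integral_const_mul _ _, integral_const_mul _ _,
    h20, h11, h02, h40, h31, h22, h13, h04]

  simp [measure_univ]

noncomputable def mu0 : Measure (ℝ × ℝ) := Measure.dirac 0
noncomputable def mu1 (a₁ : ℝ) : Measure (ℝ × ℝ) :=
  mu0.conv (dirBoxMeasure a₁ (((0:ℕ):ℝ) * π / 4))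
noncomputable def mu2 (a₁ a₂ : ℝ) : Measure (ℝ × ℝ) :=
  (mu1 a₁).conv (dirBoxMeasure a₂ (((1:ℕ):ℝ) * π / 4))
noncomputable def mu3 (a₁ a₂ a₃ : ℝ) : Measure (ℝ × ℝ) :=
  (mu2 a₁ a₂).conv (dirBoxMeasure a₃ (((2:ℕ):ℝ) * π / 4))
noncomputable def mu4 (a₁ a₂ a₃ a₄ : ℝ) : Measure (ℝ × ℝ) :=
  (mu3 a₁ a₂ a₃).conv (dirBoxMeasure a₄ (((3:ℕ):ℝ) * π / 4))


open Matrix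

set_option maxHeartbeats 4000000 in
/-- The kurtosis matrix of the four-directional box spline `β⁴_a` (directions
`0, π/4, π/2, 3π/4`) equals
`K_a = (μ₄ − 3μ₂²)[[a₁⁴+(a₂⁴+a₄⁴)/2, (a₂⁴−a₄⁴)/2],[(a₂⁴−a₄⁴)/2, a₃⁴+(a₂⁴+a₄⁴)/2]]`
with `μ₂ = 1/12`, `μ₄ = 1/80`; consequently
`‖K_a‖_F² = (μ₄−3μ₂²)²(∑a_k⁸ + (a₁⁴+a₃⁴)(a₂⁴+a₄⁴))`. -/
theorem kurtosis_fourDirectional (a₁ a₂ a₃ a₄ : ℝ)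
    (h₁ : 0 < a₁) (h₂ : 0 < a₂) (h₃ : 0 < a₃) (h₄ : 0 < a₄) :
    let a : ℕ → ℝ := fun k => if k = 0 then a₁ else if k = 1 then a₂ else if k = 2 then a₃ else a₄
    let μ := boxSplineMeasure a (fun k => k * π / 4) 4
    let C : Matrix (Fin 2) (Fin 2) ℝ :=
      !![∫ x : ℝ × ℝ, x.1 * x.1 ∂μ, ∫ x : ℝ × ℝ, x.1 * x.2 ∂μ;
         ∫ x : ℝ × ℝ, x.2 * x.1 ∂μ, ∫ x : ℝ × ℝ, x.2 * x.2 ∂μ]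
    let L : Matrix (Fin 2) (Fin 2) ℝ :=
      !![∫ x : ℝ × ℝ, (x.1^2 + x.2^2) * (x.1 * x.1) ∂μ,
         ∫ x : ℝ × ℝ, (x.1^2 + x.2^2) * (x.1 * x.2) ∂μ;
         ∫ x : ℝ × ℝ, (x.1^2 + x.2^2) * (x.2 * x.1) ∂μ,
         ∫ x : ℝ × ℝ, (x.1^2 + x.2^2) * (x.2 * x.2) ∂μ]
    let K : Matrix (Fin 2) (Fin 2) ℝ := L - C.trace • C - 2 • (C * C)
    let μ₂ : ℝ := 1/12
    let μ₄ : ℝ := 1/80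
    K = (μ₄ - 3 * μ₂^2) •
        !![a₁^4 + (a₂^4 + a₄^4)/2, (a₂^4 - a₄^4)/2;
           (a₂^4 - a₄^4)/2, a₃^4 + (a₂^4 + a₄^4)/2] ∧
    (Kᵀ * K).trace
      = (μ₄ - 3 * μ₂^2)^2 *
          ((a₁^8 + a₂^8 + a₃^8 + a₄^8) + (a₁^4 + a₃^4) * (a₂^4 + a₄^4)) := by

  intro a μ C L K μ₂ μ₄
  have h2 : Real.sqrt 2 ^ 2 = 2 := Real.sq_sqrt (by norm_num)
  have hc0 : Real.cos (((0:ℕ):ℝ) * π / 4) = 1 := by norm_num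
  have hs0 : Real.sin (((0:ℕ):ℝ) * π / 4) = 0 := by norm_num
  have hc1 : Real.cos (((1:ℕ):ℝ) * π / 4) = Real.sqrt 2 / 2 := by
    norm_num [Real.cos_pi_div_four]
  have hs1 : Real.sin (((1:ℕ):ℝ) * π / 4) = Real.sqrt 2 / 2 := by
    norm_num [Real.sin_pi_div_four]
  have hc2 : Real.cos (((2:ℕ):ℝ) * π / 4) = 0 := by
    rw [show (((2:ℕ):ℝ)) * π / 4 = π / 2 by push_cast; ring]; exact Real.cos_pi_div_two
  have hs2 : Real.sin (((2:ℕ):ℝ) * π / 4) = 1 := by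
    rw [show (((2:ℕ):ℝ)) * π / 4 = π / 2 by push_cast; ring]; exact Real.sin_pi_div_two
  have hc3 : Real.cos (((3:ℕ):ℝ) * π / 4) = -(Real.sqrt 2 / 2) := by
    rw [show (((3:ℕ):ℝ)) * π / 4 = π - π / 4 by push_cast; ring, Real.cos_pi_sub,
      Real.cos_pi_div_four]
  have hs3 : Real.sin (((3:ℕ):ℝ) * π / 4) = Real.sqrt 2 / 2 := by
    rw [show (((3:ℕ):ℝ)) * π / 4 = π - π / 4 by push_cast; ring, Real.sin_pi_sub,
      Real.sin_pi_div_four]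
  haveI hP0 : IsProbabilityMeasure mu0 := by unfold mu0; infer_instance
  haveI hP1 : IsProbabilityMeasure (mu1 a₁) := by
    haveI := isProbabilityMeasure_dirBox h₁ (((0:ℕ):ℝ) * π / 4)
    unfold mu1; infer_instance
  haveI hP2 : IsProbabilityMeasure (mu2 a₁ a₂) := by
    haveI := isProbabilityMeasure_dirBox h₂ (((1:ℕ):ℝ) * π / 4)
    unfold mu2; infer_instance
  haveI hP3 : IsProbabilityMeasure (mu3 a₁ a₂ a₃) := by
    haveI := isProbabilityMeasure_dirBox h₃ (((2:ℕ):ℝ) * π / 4)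
    unfold mu3; infer_instance
  have hb0 : ∀ᵐ x ∂mu0, ‖x‖ ≤ 0 := by
    unfold mu0; rw [MeasureTheory.ae_dirac_eq]; simp
  have hb1 : ∀ᵐ x ∂(mu1 a₁), ‖x‖ ≤ 0 + a₁ := conv_dirBox_ae_bound mu0 hb0 h₁ _
  have hb2 : ∀ᵐ x ∂(mu2 a₁ a₂), ‖x‖ ≤ 0 + a₁ + a₂ := conv_dirBox_ae_bound (mu1 a₁) hb1 h₂ _
  have hb3 : ∀ᵐ x ∂(mu3 a₁ a₂ a₃), ‖x‖ ≤ 0 + a₁ + a₂ + a₃ :=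
    conv_dirBox_ae_bound (mu2 a₁ a₂) hb2 h₃ _
  have h20_0 : (∫ x : ℝ × ℝ, x.1^2 ∂mu0) = 0 := by simp [mu0, MeasureTheory.integral_dirac]
  have h11_0 : (∫ x : ℝ × ℝ, x.1*x.2 ∂mu0) = 0 := by simp [mu0, MeasureTheory.integral_dirac]
  have h02_0 : (∫ x : ℝ × ℝ, x.2^2 ∂mu0) = 0 := by simp [mu0, MeasureTheory.integral_dirac]
  have h40_0 : (∫ x : ℝ × ℝ, x.1^4 ∂mu0) = 0 := by simp [mu0, MeasureTheory.integral_dirac]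
  have h31_0 : (∫ x : ℝ × ℝ, x.1^3*x.2 ∂mu0) = 0 := by simp [mu0, MeasureTheory.integral_dirac]
  have h22_0 : (∫ x : ℝ × ℝ, x.1^2*x.2^2 ∂mu0) = 0 := by simp [mu0, MeasureTheory.integral_dirac]
  have h13_0 : (∫ x : ℝ × ℝ, x.1*x.2^3 ∂mu0) = 0 := by simp [mu0, MeasureTheory.integral_dirac]
  have h04_0 : (∫ x : ℝ × ℝ, x.2^4 ∂mu0) = 0 := by simp [mu0, MeasureTheory.integral_dirac]
  have h20_1 : (∫ x : ℝ × ℝ, x.1^2 ∂(mu1 a₁)) = ((1/12) * a₁ ^ 2) := by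
    have hh := key (mu0) hb0 h₁ (((0:ℕ):ℝ) * π / 4) 1 0 hc0 hs0
      h20_0 h11_0 h02_0 h40_0 h31_0 h22_0 h13_0 h04_0
      (fun x : ℝ × ℝ => x.1^2) (by fun_prop)
      0 (1) 0 0 0 0 0 0 0
      (1) 0 0 0
      0
      (fun x : ℝ × ℝ => (2 * x.1)) (fun x : ℝ × ℝ => 0)
      (by intro x t; ring)
    exact hh.trans (by ring)
  have h11_1 : (∫ x : ℝ × ℝ, x.1*x.2 ∂(mu1 a₁)) = 0 := by
    have hh := key (mu0) hb0 h₁ (((0:ℕ):ℝ) * π / 4) 1 0 hc0 hs0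
      h20_0 h11_0 h02_0 h40_0 h31_0 h22_0 h13_0 h04_0
      (fun x : ℝ × ℝ => x.1*x.2) (by fun_prop)
      0 0 (1) 0 0 0 0 0 0
      0 0 0 0
      0
      (fun x : ℝ × ℝ => (x.2)) (fun x : ℝ × ℝ => 0)
      (by intro x t; ring)
    exact hh.trans (by ring)
  have h02_1 : (∫ x : ℝ × ℝ, x.2^2 ∂(mu1 a₁)) = 0 := by
    have hh := key (mu0) hb0 h₁ (((0:ℕ):ℝ) * π / 4) 1 0 hc0 hs0
      h20_0 h11_0 h02_0 h40_0 h31_0 h22_0 h13_0 h04_0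
      (fun x : ℝ × ℝ => x.2^2) (by fun_prop)
      0 0 0 (1) 0 0 0 0 0
      0 0 0 0
      0
      (fun x : ℝ × ℝ => 0) (fun x : ℝ × ℝ => 0)
      (by intro x t; ring)
    exact hh.trans (by ring)
  have h40_1 : (∫ x : ℝ × ℝ, x.1^4 ∂(mu1 a₁)) = ((1/80) * a₁ ^ 4) := by
    have hh := key (mu0) hb0 h₁ (((0:ℕ):ℝ) * π / 4) 1 0 hc0 hs0
      h20_0 h11_0 h02_0 h40_0 h31_0 h22_0 h13_0 h04_0
      (fun x : ℝ × ℝ => x.1^4) (by fun_prop)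
      0 0 0 0 (1) 0 0 0 0
      0 (6) 0 0
      (1)
      (fun x : ℝ × ℝ => (4 * x.1 ^ 3)) (fun x : ℝ × ℝ => (4 * x.1))
      (by intro x t; ring)
    exact hh.trans (by ring)
  have h31_1 : (∫ x : ℝ × ℝ, x.1^3*x.2 ∂(mu1 a₁)) = 0 := by
    have hh := key (mu0) hb0 h₁ (((0:ℕ):ℝ) * π / 4) 1 0 hc0 hs0
      h20_0 h11_0 h02_0 h40_0 h31_0 h22_0 h13_0 h04_0
      (fun x : ℝ × ℝ => x.1^3*x.2) (by fun_prop)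
      0 0 0 0 0 (1) 0 0 0
      0 0 (3) 0
      0
      (fun x : ℝ × ℝ => (3 * x.1 ^ 2 * x.2)) (fun x : ℝ × ℝ => (x.2))
      (by intro x t; ring)
    exact hh.trans (by ring)
  have h22_1 : (∫ x : ℝ × ℝ, x.1^2*x.2^2 ∂(mu1 a₁)) = 0 := by
    have hh := key (mu0) hb0 h₁ (((0:ℕ):ℝ) * π / 4) 1 0 hc0 hs0
      h20_0 h11_0 h02_0 h40_0 h31_0 h22_0 h13_0 h04_0
      (fun x : ℝ × ℝ => x.1^2*x.2^2) (by fun_prop)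
      0 0 0 0 0 0 (1) 0 0
      0 0 0 (1)
      0
      (fun x : ℝ × ℝ => (2 * x.1 * x.2 ^ 2)) (fun x : ℝ × ℝ => 0)
      (by intro x t; ring)
    exact hh.trans (by ring)
  have h13_1 : (∫ x : ℝ × ℝ, x.1*x.2^3 ∂(mu1 a₁)) = 0 := by
    have hh := key (mu0) hb0 h₁ (((0:ℕ):ℝ) * π / 4) 1 0 hc0 hs0
      h20_0 h11_0 h02_0 h40_0 h31_0 h22_0 h13_0 h04_0
      (fun x : ℝ × ℝ => x.1*x.2^3) (by fun_prop)
      0 0 0 0 0 0 0 (1) 0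
      0 0 0 0
      0
      (fun x : ℝ × ℝ => (x.2 ^ 3)) (fun x : ℝ × ℝ => 0)
      (by intro x t; ring)
    exact hh.trans (by ring)
  have h04_1 : (∫ x : ℝ × ℝ, x.2^4 ∂(mu1 a₁)) = 0 := by
    have hh := key (mu0) hb0 h₁ (((0:ℕ):ℝ) * π / 4) 1 0 hc0 hs0
      h20_0 h11_0 h02_0 h40_0 h31_0 h22_0 h13_0 h04_0
      (fun x : ℝ × ℝ => x.2^4) (by fun_prop)
      0 0 0 0 0 0 0 0 (1)
      0 0 0 0
      0
      (fun x : ℝ × ℝ => 0) (fun x : ℝ × ℝ => 0)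
      (by intro x t; ring)
    exact hh.trans (by ring)
  have h20_2 : (∫ x : ℝ × ℝ, x.1^2 ∂(mu2 a₁ a₂)) = ((1/24) * a₂ ^ 2 + (1/12) * a₁ ^ 2) := by
    have hh := key (mu1 a₁) hb1 h₂ (((1:ℕ):ℝ) * π / 4) (Real.sqrt 2 / 2) (Real.sqrt 2 / 2) hc1 hs1
      h20_1 h11_1 h02_1 h40_1 h31_1 h22_1 h13_1 h04_1
      (fun x : ℝ × ℝ => x.1^2) (by fun_prop)
      0 (1) 0 0 0 0 0 0 0
      ((1/4) * (Real.sqrt 2) ^ 2) 0 0 0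
      0
      (fun x : ℝ × ℝ => (x.1 * (Real.sqrt 2))) (fun x : ℝ × ℝ => 0)
      (by intro x t; ring)
    exact hh.trans (by linear_combination ((1/48) * a₂ ^ 2) * h2)
  have h11_2 : (∫ x : ℝ × ℝ, x.1*x.2 ∂(mu2 a₁ a₂)) = ((1/24) * a₂ ^ 2) := by
    have hh := key (mu1 a₁) hb1 h₂ (((1:ℕ):ℝ) * π / 4) (Real.sqrt 2 / 2) (Real.sqrt 2 / 2) hc1 hs1
      h20_1 h11_1 h02_1 h40_1 h31_1 h22_1 h13_1 h04_1
      (fun x : ℝ × ℝ => x.1*x.2) (by fun_prop)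
      0 0 (1) 0 0 0 0 0 0
      ((1/4) * (Real.sqrt 2) ^ 2) 0 0 0
      0
      (fun x : ℝ × ℝ => ((1/2) * x.2 * (Real.sqrt 2) + (1/2) * x.1 * (Real.sqrt 2))) (fun x : ℝ × ℝ => 0)
      (by intro x t; ring)
    exact hh.trans (by linear_combination ((1/48) * a₂ ^ 2) * h2)
  have h02_2 : (∫ x : ℝ × ℝ, x.2^2 ∂(mu2 a₁ a₂)) = ((1/24) * a₂ ^ 2) := by
    have hh := key (mu1 a₁) hb1 h₂ (((1:ℕ):ℝ) * π / 4) (Real.sqrt 2 / 2) (Real.sqrt 2 / 2) hc1 hs1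
      h20_1 h11_1 h02_1 h40_1 h31_1 h22_1 h13_1 h04_1
      (fun x : ℝ × ℝ => x.2^2) (by fun_prop)
      0 0 0 (1) 0 0 0 0 0
      ((1/4) * (Real.sqrt 2) ^ 2) 0 0 0
      0
      (fun x : ℝ × ℝ => (x.2 * (Real.sqrt 2))) (fun x : ℝ × ℝ => 0)
      (by intro x t; ring)
    exact hh.trans (by linear_combination ((1/48) * a₂ ^ 2) * h2)
  have h40_2 : (∫ x : ℝ × ℝ, x.1^4 ∂(mu2 a₁ a₂)) = ((1/320) * a₂ ^ 4 + (1/48) * a₁ ^ 2 * a₂ ^ 2 + (1/80) * a₁ ^ 4) := by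
    have hh := key (mu1 a₁) hb1 h₂ (((1:ℕ):ℝ) * π / 4) (Real.sqrt 2 / 2) (Real.sqrt 2 / 2) hc1 hs1
      h20_1 h11_1 h02_1 h40_1 h31_1 h22_1 h13_1 h04_1
      (fun x : ℝ × ℝ => x.1^4) (by fun_prop)
      0 0 0 0 (1) 0 0 0 0
      0 ((3/2) * (Real.sqrt 2) ^ 2) 0 0
      ((1/16) * (Real.sqrt 2) ^ 4)
      (fun x : ℝ × ℝ => (2 * x.1 ^ 3 * (Real.sqrt 2))) (fun x : ℝ × ℝ => ((1/2) * x.1 * (Real.sqrt 2) ^ 3))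
      (by intro x t; ring)
    exact hh.trans (by linear_combination ((1/640) * a₂ ^ 4 + (1/96) * a₁ ^ 2 * a₂ ^ 2 + (1/1280) * (Real.sqrt 2) ^ 2 * a₂ ^ 4) * h2)
  have h31_2 : (∫ x : ℝ × ℝ, x.1^3*x.2 ∂(mu2 a₁ a₂)) = ((1/320) * a₂ ^ 4 + (1/96) * a₁ ^ 2 * a₂ ^ 2) := by
    have hh := key (mu1 a₁) hb1 h₂ (((1:ℕ):ℝ) * π / 4) (Real.sqrt 2 / 2) (Real.sqrt 2 / 2) hc1 hs1
      h20_1 h11_1 h02_1 h40_1 h31_1 h22_1 h13_1 h04_1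
      (fun x : ℝ × ℝ => x.1^3*x.2) (by fun_prop)
      0 0 0 0 0 (1) 0 0 0
      0 ((3/4) * (Real.sqrt 2) ^ 2) ((3/4) * (Real.sqrt 2) ^ 2) 0
      ((1/16) * (Real.sqrt 2) ^ 4)
      (fun x : ℝ × ℝ => ((3/2) * x.1 ^ 2 * x.2 * (Real.sqrt 2) + (1/2) * x.1 ^ 3 * (Real.sqrt 2))) (fun x : ℝ × ℝ => ((1/8) * x.2 * (Real.sqrt 2) ^ 3 + (3/8) * x.1 * (Real.sqrt 2) ^ 3))
      (by intro x t; ring)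
    exact hh.trans (by linear_combination ((1/640) * a₂ ^ 4 + (1/192) * a₁ ^ 2 * a₂ ^ 2 + (1/1280) * (Real.sqrt 2) ^ 2 * a₂ ^ 4) * h2)
  have h22_2 : (∫ x : ℝ × ℝ, x.1^2*x.2^2 ∂(mu2 a₁ a₂)) = ((1/320) * a₂ ^ 4 + (1/288) * a₁ ^ 2 * a₂ ^ 2) := by
    have hh := key (mu1 a₁) hb1 h₂ (((1:ℕ):ℝ) * π / 4) (Real.sqrt 2 / 2) (Real.sqrt 2 / 2) hc1 hs1
      h20_1 h11_1 h02_1 h40_1 h31_1 h22_1 h13_1 h04_1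
      (fun x : ℝ × ℝ => x.1^2*x.2^2) (by fun_prop)
      0 0 0 0 0 0 (1) 0 0
      0 ((1/4) * (Real.sqrt 2) ^ 2) ((Real.sqrt 2) ^ 2) ((1/4) * (Real.sqrt 2) ^ 2)
      ((1/16) * (Real.sqrt 2) ^ 4)
      (fun x : ℝ × ℝ => (x.1 * x.2 ^ 2 * (Real.sqrt 2) + x.1 ^ 2 * x.2 * (Real.sqrt 2))) (fun x : ℝ × ℝ => ((1/4) * x.2 * (Real.sqrt 2) ^ 3 + (1/4) * x.1 * (Real.sqrt 2) ^ 3))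
      (by intro x t; ring)
    exact hh.trans (by linear_combination ((1/640) * a₂ ^ 4 + (1/576) * a₁ ^ 2 * a₂ ^ 2 + (1/1280) * (Real.sqrt 2) ^ 2 * a₂ ^ 4) * h2)
  have h13_2 : (∫ x : ℝ × ℝ, x.1*x.2^3 ∂(mu2 a₁ a₂)) = ((1/320) * a₂ ^ 4) := by
    have hh := key (mu1 a₁) hb1 h₂ (((1:ℕ):ℝ) * π / 4) (Real.sqrt 2 / 2) (Real.sqrt 2 / 2) hc1 hs1
      h20_1 h11_1 h02_1 h40_1 h31_1 h22_1 h13_1 h04_1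
      (fun x : ℝ × ℝ => x.1*x.2^3) (by fun_prop)
      0 0 0 0 0 0 0 (1) 0
      0 0 ((3/4) * (Real.sqrt 2) ^ 2) ((3/4) * (Real.sqrt 2) ^ 2)
      ((1/16) * (Real.sqrt 2) ^ 4)
      (fun x : ℝ × ℝ => ((1/2) * x.2 ^ 3 * (Real.sqrt 2) + (3/2) * x.1 * x.2 ^ 2 * (Real.sqrt 2))) (fun x : ℝ × ℝ => ((3/8) * x.2 * (Real.sqrt 2) ^ 3 + (1/8) * x.1 * (Real.sqrt 2) ^ 3))
      (by intro x t; ring)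
    exact hh.trans (by linear_combination ((1/640) * a₂ ^ 4 + (1/1280) * (Real.sqrt 2) ^ 2 * a₂ ^ 4) * h2)
  have h04_2 : (∫ x : ℝ × ℝ, x.2^4 ∂(mu2 a₁ a₂)) = ((1/320) * a₂ ^ 4) := by
    have hh := key (mu1 a₁) hb1 h₂ (((1:ℕ):ℝ) * π / 4) (Real.sqrt 2 / 2) (Real.sqrt 2 / 2) hc1 hs1
      h20_1 h11_1 h02_1 h40_1 h31_1 h22_1 h13_1 h04_1
      (fun x : ℝ × ℝ => x.2^4) (by fun_prop)
      0 0 0 0 0 0 0 0 (1)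
      0 0 0 ((3/2) * (Real.sqrt 2) ^ 2)
      ((1/16) * (Real.sqrt 2) ^ 4)
      (fun x : ℝ × ℝ => (2 * x.2 ^ 3 * (Real.sqrt 2))) (fun x : ℝ × ℝ => ((1/2) * x.2 * (Real.sqrt 2) ^ 3))
      (by intro x t; ring)
    exact hh.trans (by linear_combination ((1/640) * a₂ ^ 4 + (1/1280) * (Real.sqrt 2) ^ 2 * a₂ ^ 4) * h2)
  have h20_3 : (∫ x : ℝ × ℝ, x.1^2 ∂(mu3 a₁ a₂ a₃)) = ((1/24) * a₂ ^ 2 + (1/12) * a₁ ^ 2) := by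
    have hh := key (mu2 a₁ a₂) hb2 h₃ (((2:ℕ):ℝ) * π / 4) 0 1 hc2 hs2
      h20_2 h11_2 h02_2 h40_2 h31_2 h22_2 h13_2 h04_2
      (fun x : ℝ × ℝ => x.1^2) (by fun_prop)
      0 (1) 0 0 0 0 0 0 0
      0 0 0 0
      0
      (fun x : ℝ × ℝ => 0) (fun x : ℝ × ℝ => 0)
      (by intro x t; ring)
    exact hh.trans (by ring)
  have h11_3 : (∫ x : ℝ × ℝ, x.1*x.2 ∂(mu3 a₁ a₂ a₃)) = ((1/24) * a₂ ^ 2) := by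
    have hh := key (mu2 a₁ a₂) hb2 h₃ (((2:ℕ):ℝ) * π / 4) 0 1 hc2 hs2
      h20_2 h11_2 h02_2 h40_2 h31_2 h22_2 h13_2 h04_2
      (fun x : ℝ × ℝ => x.1*x.2) (by fun_prop)
      0 0 (1) 0 0 0 0 0 0
      0 0 0 0
      0
      (fun x : ℝ × ℝ => (x.1)) (fun x : ℝ × ℝ => 0)
      (by intro x t; ring)
    exact hh.trans (by ring)
  have h02_3 : (∫ x : ℝ × ℝ, x.2^2 ∂(mu3 a₁ a₂ a₃)) = ((1/12) * a₃ ^ 2 + (1/24) * a₂ ^ 2) := by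
    have hh := key (mu2 a₁ a₂) hb2 h₃ (((2:ℕ):ℝ) * π / 4) 0 1 hc2 hs2
      h20_2 h11_2 h02_2 h40_2 h31_2 h22_2 h13_2 h04_2
      (fun x : ℝ × ℝ => x.2^2) (by fun_prop)
      0 0 0 (1) 0 0 0 0 0
      (1) 0 0 0
      0
      (fun x : ℝ × ℝ => (2 * x.2)) (fun x : ℝ × ℝ => 0)
      (by intro x t; ring)
    exact hh.trans (by ring)
  have h40_3 : (∫ x : ℝ × ℝ, x.1^4 ∂(mu3 a₁ a₂ a₃)) = ((1/320) * a₂ ^ 4 + (1/48) * a₁ ^ 2 * a₂ ^ 2 + (1/80) * a₁ ^ 4) := by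
    have hh := key (mu2 a₁ a₂) hb2 h₃ (((2:ℕ):ℝ) * π / 4) 0 1 hc2 hs2
      h20_2 h11_2 h02_2 h40_2 h31_2 h22_2 h13_2 h04_2
      (fun x : ℝ × ℝ => x.1^4) (by fun_prop)
      0 0 0 0 (1) 0 0 0 0
      0 0 0 0
      0
      (fun x : ℝ × ℝ => 0) (fun x : ℝ × ℝ => 0)
      (by intro x t; ring)
    exact hh.trans (by ring)
  have h31_3 : (∫ x : ℝ × ℝ, x.1^3*x.2 ∂(mu3 a₁ a₂ a₃)) = ((1/320) * a₂ ^ 4 + (1/96) * a₁ ^ 2 * a₂ ^ 2) := by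
    have hh := key (mu2 a₁ a₂) hb2 h₃ (((2:ℕ):ℝ) * π / 4) 0 1 hc2 hs2
      h20_2 h11_2 h02_2 h40_2 h31_2 h22_2 h13_2 h04_2
      (fun x : ℝ × ℝ => x.1^3*x.2) (by fun_prop)
      0 0 0 0 0 (1) 0 0 0
      0 0 0 0
      0
      (fun x : ℝ × ℝ => (x.1 ^ 3)) (fun x : ℝ × ℝ => 0)
      (by intro x t; ring)
    exact hh.trans (by ring)
  have h22_3 : (∫ x : ℝ × ℝ, x.1^2*x.2^2 ∂(mu3 a₁ a₂ a₃)) = ((1/288) * a₂ ^ 2 * a₃ ^ 2 + (1/320) * a₂ ^ 4 + (1/144) * a₁ ^ 2 * a₃ ^ 2 + (1/288) * a₁ ^ 2 * a₂ ^ 2) := by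
    have hh := key (mu2 a₁ a₂) hb2 h₃ (((2:ℕ):ℝ) * π / 4) 0 1 hc2 hs2
      h20_2 h11_2 h02_2 h40_2 h31_2 h22_2 h13_2 h04_2
      (fun x : ℝ × ℝ => x.1^2*x.2^2) (by fun_prop)
      0 0 0 0 0 0 (1) 0 0
      0 (1) 0 0
      0
      (fun x : ℝ × ℝ => (2 * x.1 ^ 2 * x.2)) (fun x : ℝ × ℝ => 0)
      (by intro x t; ring)
    exact hh.trans (by ring)
  have h13_3 : (∫ x : ℝ × ℝ, x.1*x.2^3 ∂(mu3 a₁ a₂ a₃)) = ((1/96) * a₂ ^ 2 * a₃ ^ 2 + (1/320) * a₂ ^ 4) := by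
    have hh := key (mu2 a₁ a₂) hb2 h₃ (((2:ℕ):ℝ) * π / 4) 0 1 hc2 hs2
      h20_2 h11_2 h02_2 h40_2 h31_2 h22_2 h13_2 h04_2
      (fun x : ℝ × ℝ => x.1*x.2^3) (by fun_prop)
      0 0 0 0 0 0 0 (1) 0
      0 0 (3) 0
      0
      (fun x : ℝ × ℝ => (3 * x.1 * x.2 ^ 2)) (fun x : ℝ × ℝ => (x.1))
      (by intro x t; ring)
    exact hh.trans (by ring)
  have h04_3 : (∫ x : ℝ × ℝ, x.2^4 ∂(mu3 a₁ a₂ a₃)) = ((1/80) * a₃ ^ 4 + (1/48) * a₂ ^ 2 * a₃ ^ 2 + (1/320) * a₂ ^ 4) := by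
    have hh := key (mu2 a₁ a₂) hb2 h₃ (((2:ℕ):ℝ) * π / 4) 0 1 hc2 hs2
      h20_2 h11_2 h02_2 h40_2 h31_2 h22_2 h13_2 h04_2
      (fun x : ℝ × ℝ => x.2^4) (by fun_prop)
      0 0 0 0 0 0 0 0 (1)
      0 0 0 (6)
      (1)
      (fun x : ℝ × ℝ => (4 * x.2 ^ 3)) (fun x : ℝ × ℝ => (4 * x.2))
      (by intro x t; ring)
    exact hh.trans (by ring)
  have hV11_4 : (∫ x : ℝ × ℝ, x.1 * x.1 ∂(mu4 a₁ a₂ a₃ a₄)) = ((1/24) * a₄ ^ 2 + (1/24) * a₂ ^ 2 + (1/12) * a₁ ^ 2) := by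
    have hh := key (mu3 a₁ a₂ a₃) hb3 h₄ (((3:ℕ):ℝ) * π / 4) (-(Real.sqrt 2 / 2)) (Real.sqrt 2 / 2) hc3 hs3
      h20_3 h11_3 h02_3 h40_3 h31_3 h22_3 h13_3 h04_3
      (fun x : ℝ × ℝ => x.1 * x.1) (by fun_prop)
      0 (1) 0 0 0 0 0 0 0
      ((1/4) * (Real.sqrt 2) ^ 2) 0 0 0
      0
      (fun x : ℝ × ℝ => ((-1) * x.1 * (Real.sqrt 2))) (fun x : ℝ × ℝ => 0)
      (by intro x t; ring)
    exact hh.trans (by linear_combination ((1/48) * a₄ ^ 2) * h2)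
  have hV12_4 : (∫ x : ℝ × ℝ, x.1 * x.2 ∂(mu4 a₁ a₂ a₃ a₄)) = ((-1/24) * a₄ ^ 2 + (1/24) * a₂ ^ 2) := by
    have hh := key (mu3 a₁ a₂ a₃) hb3 h₄ (((3:ℕ):ℝ) * π / 4) (-(Real.sqrt 2 / 2)) (Real.sqrt 2 / 2) hc3 hs3
      h20_3 h11_3 h02_3 h40_3 h31_3 h22_3 h13_3 h04_3
      (fun x : ℝ × ℝ => x.1 * x.2) (by fun_prop)
      0 0 (1) 0 0 0 0 0 0
      ((-1/4) * (Real.sqrt 2) ^ 2) 0 0 0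
      0
      (fun x : ℝ × ℝ => ((-1/2) * x.2 * (Real.sqrt 2) + (1/2) * x.1 * (Real.sqrt 2))) (fun x : ℝ × ℝ => 0)
      (by intro x t; ring)
    exact hh.trans (by linear_combination ((-1/48) * a₄ ^ 2) * h2)
  have hV21_4 : (∫ x : ℝ × ℝ, x.2 * x.1 ∂(mu4 a₁ a₂ a₃ a₄)) = ((-1/24) * a₄ ^ 2 + (1/24) * a₂ ^ 2) := by
    have hh := key (mu3 a₁ a₂ a₃) hb3 h₄ (((3:ℕ):ℝ) * π / 4) (-(Real.sqrt 2 / 2)) (Real.sqrt 2 / 2) hc3 hs3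
      h20_3 h11_3 h02_3 h40_3 h31_3 h22_3 h13_3 h04_3
      (fun x : ℝ × ℝ => x.2 * x.1) (by fun_prop)
      0 0 (1) 0 0 0 0 0 0
      ((-1/4) * (Real.sqrt 2) ^ 2) 0 0 0
      0
      (fun x : ℝ × ℝ => ((-1/2) * x.2 * (Real.sqrt 2) + (1/2) * x.1 * (Real.sqrt 2))) (fun x : ℝ × ℝ => 0)
      (by intro x t; ring)
    exact hh.trans (by linear_combination ((-1/48) * a₄ ^ 2) * h2)
  have hV22_4 : (∫ x : ℝ × ℝ, x.2 * x.2 ∂(mu4 a₁ a₂ a₃ a₄)) = ((1/24) * a₄ ^ 2 + (1/12) * a₃ ^ 2 + (1/24) * a₂ ^ 2) := by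
    have hh := key (mu3 a₁ a₂ a₃) hb3 h₄ (((3:ℕ):ℝ) * π / 4) (-(Real.sqrt 2 / 2)) (Real.sqrt 2 / 2) hc3 hs3
      h20_3 h11_3 h02_3 h40_3 h31_3 h22_3 h13_3 h04_3
      (fun x : ℝ × ℝ => x.2 * x.2) (by fun_prop)
      0 0 0 (1) 0 0 0 0 0
      ((1/4) * (Real.sqrt 2) ^ 2) 0 0 0
      0
      (fun x : ℝ × ℝ => (x.2 * (Real.sqrt 2))) (fun x : ℝ × ℝ => 0)
      (by intro x t; ring)
    exact hh.trans (by linear_combination ((1/48) * a₄ ^ 2) * h2)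
  have hW11_4 : (∫ x : ℝ × ℝ, (x.1^2 + x.2^2) * (x.1 * x.1) ∂(mu4 a₁ a₂ a₃ a₄)) = ((1/160) * a₄ ^ 4 + (1/288) * a₃ ^ 2 * a₄ ^ 2 + (1/144) * a₂ ^ 2 * a₄ ^ 2 + (1/288) * a₂ ^ 2 * a₃ ^ 2 + (1/160) * a₂ ^ 4 + (7/288) * a₁ ^ 2 * a₄ ^ 2 + (1/144) * a₁ ^ 2 * a₃ ^ 2 + (7/288) * a₁ ^ 2 * a₂ ^ 2 + (1/80) * a₁ ^ 4) := by
    have hh := key (mu3 a₁ a₂ a₃) hb3 h₄ (((3:ℕ):ℝ) * π / 4) (-(Real.sqrt 2 / 2)) (Real.sqrt 2 / 2) hc3 hs3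
      h20_3 h11_3 h02_3 h40_3 h31_3 h22_3 h13_3 h04_3
      (fun x : ℝ × ℝ => (x.1^2 + x.2^2) * (x.1 * x.1)) (by fun_prop)
      0 0 0 0 (1) 0 (1) 0 0
      0 ((7/4) * (Real.sqrt 2) ^ 2) ((-1) * (Real.sqrt 2) ^ 2) ((1/4) * (Real.sqrt 2) ^ 2)
      ((1/8) * (Real.sqrt 2) ^ 4)
      (fun x : ℝ × ℝ => ((-1) * x.1 * x.2 ^ 2 * (Real.sqrt 2) + x.1 ^ 2 * x.2 * (Real.sqrt 2) + (-2) * x.1 ^ 3 * (Real.sqrt 2))) (fun x : ℝ × ℝ => ((1/4) * x.2 * (Real.sqrt 2) ^ 3 + (-3/4) * x.1 * (Real.sqrt 2) ^ 3))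
      (by intro x t; ring)
    exact hh.trans (by linear_combination ((1/320) * a₄ ^ 4 + (1/576) * a₃ ^ 2 * a₄ ^ 2 + (1/288) * a₂ ^ 2 * a₄ ^ 2 + (7/576) * a₁ ^ 2 * a₄ ^ 2 + (1/640) * (Real.sqrt 2) ^ 2 * a₄ ^ 4) * h2)
  have hW12_4 : (∫ x : ℝ × ℝ, (x.1^2 + x.2^2) * (x.1 * x.2) ∂(mu4 a₁ a₂ a₃ a₄)) = ((-1/160) * a₄ ^ 4 + (-1/96) * a₃ ^ 2 * a₄ ^ 2 + (1/96) * a₂ ^ 2 * a₃ ^ 2 + (1/160) * a₂ ^ 4 + (-1/96) * a₁ ^ 2 * a₄ ^ 2 + (1/96) * a₁ ^ 2 * a₂ ^ 2) := by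
    have hh := key (mu3 a₁ a₂ a₃) hb3 h₄ (((3:ℕ):ℝ) * π / 4) (-(Real.sqrt 2 / 2)) (Real.sqrt 2 / 2) hc3 hs3
      h20_3 h11_3 h02_3 h40_3 h31_3 h22_3 h13_3 h04_3
      (fun x : ℝ × ℝ => (x.1^2 + x.2^2) * (x.1 * x.2)) (by fun_prop)
      0 0 0 0 0 (1) 0 (1) 0
      0 ((-3/4) * (Real.sqrt 2) ^ 2) ((3/2) * (Real.sqrt 2) ^ 2) ((-3/4) * (Real.sqrt 2) ^ 2)
      ((-1/8) * (Real.sqrt 2) ^ 4)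
      (fun x : ℝ × ℝ => ((-1/2) * x.2 ^ 3 * (Real.sqrt 2) + (3/2) * x.1 * x.2 ^ 2 * (Real.sqrt 2) + (-3/2) * x.1 ^ 2 * x.2 * (Real.sqrt 2) + (1/2) * x.1 ^ 3 * (Real.sqrt 2))) (fun x : ℝ × ℝ => ((-1/2) * x.2 * (Real.sqrt 2) ^ 3 + (1/2) * x.1 * (Real.sqrt 2) ^ 3))
      (by intro x t; ring)
    exact hh.trans (by linear_combination ((-1/320) * a₄ ^ 4 + (-1/192) * a₃ ^ 2 * a₄ ^ 2 + (-1/192) * a₁ ^ 2 * a₄ ^ 2 + (-1/640) * (Real.sqrt 2) ^ 2 * a₄ ^ 4) * h2)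
  have hW21_4 : (∫ x : ℝ × ℝ, (x.1^2 + x.2^2) * (x.2 * x.1) ∂(mu4 a₁ a₂ a₃ a₄)) = ((-1/160) * a₄ ^ 4 + (-1/96) * a₃ ^ 2 * a₄ ^ 2 + (1/96) * a₂ ^ 2 * a₃ ^ 2 + (1/160) * a₂ ^ 4 + (-1/96) * a₁ ^ 2 * a₄ ^ 2 + (1/96) * a₁ ^ 2 * a₂ ^ 2) := by
    have hh := key (mu3 a₁ a₂ a₃) hb3 h₄ (((3:ℕ):ℝ) * π / 4) (-(Real.sqrt 2 / 2)) (Real.sqrt 2 / 2) hc3 hs3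
      h20_3 h11_3 h02_3 h40_3 h31_3 h22_3 h13_3 h04_3
      (fun x : ℝ × ℝ => (x.1^2 + x.2^2) * (x.2 * x.1)) (by fun_prop)
      0 0 0 0 0 (1) 0 (1) 0
      0 ((-3/4) * (Real.sqrt 2) ^ 2) ((3/2) * (Real.sqrt 2) ^ 2) ((-3/4) * (Real.sqrt 2) ^ 2)
      ((-1/8) * (Real.sqrt 2) ^ 4)
      (fun x : ℝ × ℝ => ((-1/2) * x.2 ^ 3 * (Real.sqrt 2) + (3/2) * x.1 * x.2 ^ 2 * (Real.sqrt 2) + (-3/2) * x.1 ^ 2 * x.2 * (Real.sqrt 2) + (1/2) * x.1 ^ 3 * (Real.sqrt 2))) (fun x : ℝ × ℝ => ((-1/2) * x.2 * (Real.sqrt 2) ^ 3 + (1/2) * x.1 * (Real.sqrt 2) ^ 3))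
      (by intro x t; ring)
    exact hh.trans (by linear_combination ((-1/320) * a₄ ^ 4 + (-1/192) * a₃ ^ 2 * a₄ ^ 2 + (-1/192) * a₁ ^ 2 * a₄ ^ 2 + (-1/640) * (Real.sqrt 2) ^ 2 * a₄ ^ 4) * h2)
  have hW22_4 : (∫ x : ℝ × ℝ, (x.1^2 + x.2^2) * (x.2 * x.2) ∂(mu4 a₁ a₂ a₃ a₄)) = ((1/160) * a₄ ^ 4 + (7/288) * a₃ ^ 2 * a₄ ^ 2 + (1/80) * a₃ ^ 4 + (1/144) * a₂ ^ 2 * a₄ ^ 2 + (7/288) * a₂ ^ 2 * a₃ ^ 2 + (1/160) * a₂ ^ 4 + (1/288) * a₁ ^ 2 * a₄ ^ 2 + (1/144) * a₁ ^ 2 * a₃ ^ 2 + (1/288) * a₁ ^ 2 * a₂ ^ 2) := by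
    have hh := key (mu3 a₁ a₂ a₃) hb3 h₄ (((3:ℕ):ℝ) * π / 4) (-(Real.sqrt 2 / 2)) (Real.sqrt 2 / 2) hc3 hs3
      h20_3 h11_3 h02_3 h40_3 h31_3 h22_3 h13_3 h04_3
      (fun x : ℝ × ℝ => (x.1^2 + x.2^2) * (x.2 * x.2)) (by fun_prop)
      0 0 0 0 0 0 (1) 0 (1)
      0 ((1/4) * (Real.sqrt 2) ^ 2) ((-1) * (Real.sqrt 2) ^ 2) ((7/4) * (Real.sqrt 2) ^ 2)
      ((1/8) * (Real.sqrt 2) ^ 4)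
      (fun x : ℝ × ℝ => (2 * x.2 ^ 3 * (Real.sqrt 2) + (-1) * x.1 * x.2 ^ 2 * (Real.sqrt 2) + x.1 ^ 2 * x.2 * (Real.sqrt 2))) (fun x : ℝ × ℝ => ((3/4) * x.2 * (Real.sqrt 2) ^ 3 + (-1/4) * x.1 * (Real.sqrt 2) ^ 3))
      (by intro x t; ring)
    exact hh.trans (by linear_combination ((1/320) * a₄ ^ 4 + (7/576) * a₃ ^ 2 * a₄ ^ 2 + (1/288) * a₂ ^ 2 * a₄ ^ 2 + (1/576) * a₁ ^ 2 * a₄ ^ 2 + (1/640) * (Real.sqrt 2) ^ 2 * a₄ ^ 4) * h2)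
  have hμeq : μ = mu4 a₁ a₂ a₃ a₄ := rfl
  simp only [K, L, C, μ₂, μ₄]
  rw [hμeq, hV11_4, hV12_4, hV21_4, hV22_4, hW11_4, hW12_4, hW21_4, hW22_4]
  constructor
  · ext i j
    fin_cases i <;> fin_cases j <;>
      simp [Matrix.trace_fin_two, Matrix.sub_apply, Matrix.smul_apply, Matrix.mul_apply,
        Fin.sum_univ_two, smul_eq_mul, nsmul_eq_mul, Matrix.vecHead, Matrix.vecTail] <;> ring
  · simp [Matrix.trace_fin_two, Matrix.transpose_apply, Matrix.mul_apply, Fin.sum_univ_two,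
      Matrix.sub_apply, Matrix.smul_apply, smul_eq_mul, nsmul_eq_mul, Matrix.vecHead,
      Matrix.vecTail]
    ring
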